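/- arXiv:2307.04057 — 5 statements merged into one kernel-verified Lean document; each statement's English description precedes it below -/
import Mathlib

section
/- (Theorem: bidirectional attention as a mixture of continuous word experts.) Define for each position j ∈ [S] the expert f_j(X̄) = W^{LOV} (X̄C+P)^T e_j + g + D e_m ∈ ℝ^V, the gating score h_j(X̄) = e_j^T (X̄C+P) W^{KQ} (c_{V+1} + P^T e_m) / √d_w, the mixture weight π_j(X̄) = ( softmax(h(X̄)) )_j, and the mixture-of-experts predictor F(X̄) = Σ_{j∈[S]} π_j(X̄) f_j(X̄). Then the MLM objective of single-head single-layer bidirectional attention satisfies L_MLM(m,b) = −F(X̄)_b + log Σ_{k=1}^{V} exp( F(X̄)_k ); that is, it equals the cross-entropy between the one-hot encoding of the masked token b and the prediction probabilities softmax(F(X̄)). -/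
open Matrix BigOperators

noncomputable def softmax {ι : Type*} [Fintype ι] (v : ι → ℝ) : ι → ℝ :=
  fun i => Real.exp (v i) / ∑ l, Real.exp (v l)

lemma softmax_sum_one {ι : Type*} [Fintype ι] [Nonempty ι] (v : ι → ℝ) :
    ∑ i, softmax v i = 1 := by
  unfold softmax
  rw [← Finset.sum_div, div_self]
  positivity

lemma log_softmax {ι : Type*} [Fintype ι] [Nonempty ι] (v : ι → ℝ) (i : ι) :
    Real.log (softmax v i) = v i - Real.log (∑ l, Real.exp (v l)) := by
  unfold softmax
  rw [Real.log_div (Real.exp_ne_zero _) (by positivity), Real.log_exp]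

/-- **Theorem (bidirectional attention as a mixture of continuous word experts).**
Define the experts `f j = WLOV (X̄C+P)ᵀ eⱼ + g + D eₘ`, the gating scores
`h j = eⱼᵀ (X̄C+P) WKQ (c_{V+1} + Pᵀ eₘ)/√dw`, the mixture weights `π = softmax h`,
and the mixture-of-experts predictor `F = Σⱼ π j • f j`. Then the MLM objective of
single-head single-layer bidirectional attention satisfies
`L = −F(X̄)_b + log Σₖ exp(F(X̄)_k)`, the cross-entropy between the one-hot encoding of
the masked token `b` and the prediction probabilities `softmax (F X̄)`. -/
theorem bidirectional_attention_as_mixture_of_experts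
    (S V p d dw : ℕ) (hS : 0 < S) (hV : 0 < V) (hp : 0 < p) (hd : 0 < d) (hdw : 0 < dw)
    (C : Matrix (Fin (V + 1)) (Fin p) ℝ)
    (P : Matrix (Fin S) (Fin p) ℝ)
    (Xbar : Matrix (Fin S) (Fin (V + 1)) ℝ)
    (m : Fin S) (b : Fin V)
    (hrows : ∀ i : Fin S, ∃ k : Fin (V + 1), ∀ l : Fin (V + 1),
      Xbar i l = if l = k then 1 else 0)
    (hmask : ∀ l : Fin (V + 1), Xbar m l = if l = Fin.last V then 1 else 0)
    (Wv : Matrix (Fin d) (Fin p) ℝ) (Wq : Matrix (Fin dw) (Fin p) ℝ)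
    (Wk : Matrix (Fin dw) (Fin p) ℝ) (Wo : Matrix (Fin d) (Fin p) ℝ)
    (W' : Matrix (Fin p) (Fin p) ℝ) (W'' : Matrix (Fin V) (Fin p) ℝ)
    -- the forward pass
    (Xp : Matrix (Fin S) (Fin p) ℝ) (hXp : Xp = Xbar * C + P)
    (Xattn : Matrix (Fin S) (Fin d) ℝ)
    (hXattn : Xattn =
      (Matrix.of fun i =>
        softmax (((1 / Real.sqrt dw) • (Xp * Wq.transpose * Wk * Xp.transpose)) i))
        * Xp * Wv.transpose)
    (Z' : Matrix (Fin S) (Fin p) ℝ) (hZ' : Z' = Xp + Xattn * Wo)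
    (Z'' : Matrix (Fin S) (Fin p) ℝ) (hZ'' : ∀ i : Fin S, Z'' i = Z' i + W'.mulVec (Z' i))
    -- the MLM loss for predicting token `b` at the masked position `m`
    (L : ℝ) (hL : L = - Real.log (softmax (W''.mulVec (Z'' m)) b))
    -- the reparametrized matrices
    (Wl : Matrix (Fin V) (Fin p) ℝ) (hWl : Wl = W'' + W'' * W')
    (g : Fin V → ℝ) (hg : g = Wl.mulVec (C (Fin.last V)))
    (D : Matrix (Fin V) (Fin S) ℝ) (hD : D = Wl * P.transpose)
    (WLOV : Matrix (Fin V) (Fin p) ℝ) (hWLOV : WLOV = Wl * Wo.transpose * Wv)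
    (WKQ : Matrix (Fin p) (Fin p) ℝ) (hWKQ : WKQ = Wk.transpose * Wq)
    -- the experts, gating scores, mixture weights, and mixture-of-experts predictor
    (f : Fin S → Fin V → ℝ)
    (hf : f = fun j => WLOV.mulVec (Xp j) + g + D.mulVec (Pi.single m 1))
    (h : Fin S → ℝ)
    (hh : h = fun j => (Xp j ⬝ᵥ WKQ.mulVec (C (Fin.last V) + P m)) / Real.sqrt dw)
    (π : Fin S → ℝ) (hπ : π = softmax h)
    (F : Fin V → ℝ) (hF : F = ∑ j, π j • f j) :
    L = -(F b) + Real.log (∑ k, Real.exp (F k)) ∧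
    L = - Real.log (softmax F b) := by
  have : Nonempty (Fin S) := ⟨m⟩
  have hVne : Nonempty (Fin V) := ⟨b⟩
  -- row m of Xp
  have hXpm : Xp m = C (Fin.last V) + P m := by
    funext c
    rw [hXp]
    simp [Matrix.add_apply, Matrix.mul_apply, hmask, ite_mul]
  -- attention score entry identity
  have entry : ∀ j : Fin S, (Xp * Wq.transpose * Wk * Xp.transpose) m j
      = Xp j ⬝ᵥ (Wk.transpose * Wq).mulVec (Xp m) := by
    intro j
    have ht : (Xp * Wq.transpose * Wk * Xp.transpose) m j
        = (Xp * (Wk.transpose * Wq) * Xp.transpose) j m := by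
      calc (Xp * Wq.transpose * Wk * Xp.transpose) m j
          = (Xp * Wq.transpose * Wk * Xp.transpose).transpose j m := rfl
        _ = (Xp * (Wk.transpose * Wq) * Xp.transpose) j m := by
            rw [show (Xp * Wq.transpose * Wk * Xp.transpose).transpose
                = Xp * (Wk.transpose * Wq) * Xp.transpose by
              simp [Matrix.transpose_mul, Matrix.mul_assoc]]
    rw [ht]
    simp only [Matrix.mul_apply, dotProduct, Matrix.mulVec, Matrix.transpose_apply,
      Finset.sum_mul, Finset.mul_sum]
    rw [Finset.sum_comm]
    exact Finset.sum_congr rfl fun a _ => Finset.sum_congr rfl fun c _ =>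
      Finset.sum_congr rfl fun e _ => by ring
  -- gating scores equal scaled attention scores of row m
  have hh' : h = ((1 / Real.sqrt dw) • (Xp * Wq.transpose * Wk * Xp.transpose)) m := by
    funext j
    rw [hh]
    simp only [Matrix.smul_apply, smul_eq_mul, one_div]
    rw [← hXpm, hWKQ, ← entry j, div_eq_mul_inv, mul_comm]
  have hπ' : ∀ j, π j =
      softmax (((1 / Real.sqrt dw) • (Xp * Wq.transpose * Wk * Xp.transpose)) m) j := by
    intro j; rw [hπ, hh']
  -- attention row
  have hattnm : Xattn m = ∑ j, π j • Wv.mulVec (Xp j) := by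
    funext k
    rw [hXattn]
    simp only [Matrix.mul_apply, Matrix.of_apply, Matrix.transpose_apply,
      Finset.sum_apply, Pi.smul_apply, Matrix.mulVec, dotProduct, smul_eq_mul,
      Finset.sum_mul, Finset.mul_sum]
    rw [Finset.sum_comm]
    apply Finset.sum_congr rfl; intro j _
    rw [hπ' j]
    apply Finset.sum_congr rfl; intro c _
    ring
  -- linearity of mulVec over the π-weighted sums
  have lin : ∀ {q r : ℕ} (M : Matrix (Fin q) (Fin r) ℝ) (w : Fin S → Fin r → ℝ),
      M.mulVec (∑ j, π j • w j) = ∑ j, π j • M.mulVec (w j) := by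
    intro q r M w
    rw [← Matrix.mulVecLin_apply, map_sum]
    simp [Matrix.mulVecLin_apply]
  -- the key identity
  have key : W''.mulVec (Z'' m) = F := by
    have h1 : W''.mulVec (Z'' m) = Wl.mulVec (Z' m) := by
      rw [hZ'' m, hWl, Matrix.mulVec_add, Matrix.add_mulVec, Matrix.mulVec_mulVec]
    have h2 : Z' m = Xp m + Wo.transpose.mulVec (Xattn m) := by
      funext c
      rw [hZ']
      simp [Matrix.add_apply, Matrix.mul_apply, Matrix.mulVec, dotProduct,
        Matrix.transpose_apply, mul_comm]
    have h3 : Wl.mulVec (Xp m) = g + D.mulVec (Pi.single m 1) := by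
      rw [hXpm, Matrix.mulVec_add, hg, hD, ← Matrix.mulVec_mulVec]
      congr 1
      rw [Matrix.mulVec_single]
      funext c
      simp [Matrix.transpose_apply]
      rfl
    have h4 : Wl.mulVec (Wo.transpose.mulVec (Xattn m)) = ∑ j, π j • WLOV.mulVec (Xp j) := by
      rw [hattnm, lin, lin, hWLOV]
      exact Finset.sum_congr rfl fun j _ => by
        rw [Matrix.mulVec_mulVec, Matrix.mulVec_mulVec]
    have hsum : ∑ j, π j = 1 := by
      rw [hπ]; exact softmax_sum_one h
    have expand : ∑ j, π j • f j
        = ∑ j, (π j • WLOV.mulVec (Xp j) + π j • g + π j • D.mulVec (Pi.single m 1)) := by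
      refine Finset.sum_congr rfl fun j _ => ?_
      rw [hf]
      simp only [smul_add]
    rw [h1, h2, Matrix.mulVec_add, h3, h4, hF, expand]
    rw [Finset.sum_add_distrib, Finset.sum_add_distrib, ← Finset.sum_smul, ← Finset.sum_smul,
      hsum, one_smul, one_smul]
    abel
  -- conclude
  have hcross : L = - Real.log (softmax F b) := by rw [hL, key]
  refine ⟨?_, hcross⟩
  rw [hcross, log_softmax]
  ring
end

section
/- (Proposition 4, linear word analogies in CBOW embeddings.) Suppose the embeddings exactly factorize M, i.e., w_i^T c_j = M_{ij} for all i, j ∈ [|V|], and suppose the |V|×p context-embedding matrix C (with rows c_j^T) has rank p, with left inverse C† = (C^T C)^{−1} C^T. Then for any words a, a*, b, b* such that the sets W = {w_b, w_{a*}} and W* = {w_{b*}, w_a} each have exactly two elements, w_{b*} = w_{a*} − w_a + w_b + C†( ρ^{W,W*} + σ^{W} − σ^{W*} + δ^{W,W*} ) and also w_{b*} = w_{a*} − w_a + w_b + C†( ξ^{W,W*} + σ^{W} − σ^{W*} ), where ρ^{W,W*}, σ^{W}, σ^{W*}, δ^{W,W*}, ξ^{W,W*} ∈ ℝ^{|V|}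 are the vectors with j-th coordinates ρ_j^{W,W*} = log( p(c_j | W*) / p(c_j | W) ), σ_j^{W} = log( p(W | c_j) / Π_{w_i ∈ W} p(w_i | c_j) ), σ_j^{W*} = log( p(W* | c_j) / Π_{w_i ∈ W*} p(w_i | c_j) ), δ_j^{W,W*} = log( p(W*) / p(W) ), ξ_j^{W,W*} = log( p(W* | c_j) / p(W | c_j) ). -/
open Matrix BigOperators

/-- **Proposition 4 (linear word analogies in CBOW embeddings).**
Suppose the embeddings exactly factorize `M`, i.e. `wᵢᵀcⱼ = M i j` for all `i, j`, and
the `|V|×p` context-embedding matrix `C` has rank `p`, with left inverse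
`C† = (CᵀC)⁻¹Cᵀ`. Then for words `a, a*, b, b*` such that `W = {w_b, w_{a*}}` and
`W* = {w_{b*}, w_a}` each have exactly two elements,
`w_{b*} = w_{a*} − w_a + w_b + C†(ρ + σ − σ* + δ)` and
`w_{b*} = w_{a*} − w_a + w_b + C†(ξ + σ − σ*)`. -/
theorem cbow_linear_word_analogies
    (V p : ℕ) (hV : 1 ≤ V)
    -- joint probabilities `p(wᵢ, cⱼ)` and context marginals `p(cⱼ)`
    (pj : Fin V → Fin V → ℝ) (hpj : ∀ i j, 0 < pj i j)
    (pc : Fin V → ℝ) (hpc : ∀ j, 0 < pc j)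
    -- the matrix `M`
    (M : Fin V → Fin V → ℝ)
    (hM : M = fun i j => Real.log (pj i j / pc j) + Real.log V)
    -- center embeddings `wᵢ` and context embeddings `cⱼ`
    (w : Fin V → Fin p → ℝ) (c : Fin V → Fin p → ℝ)
    -- exact factorization `wᵢᵀ cⱼ = M i j`
    (hfact : ∀ i j : Fin V, w i ⬝ᵥ c j = M i j)
    -- the context-embedding matrix, its rank-`p` assumption, and its left inverse
    (Cmat : Matrix (Fin V) (Fin p) ℝ) (hC : Cmat = Matrix.of c)
    (hrank : Cmat.rank = p)
    (Cdag : Matrix (Fin p) (Fin V) ℝ)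
    (hCdag : Cdag = (Cmat.transpose * Cmat)⁻¹ * Cmat.transpose)
    -- the four words and the two word sets, each with exactly two elements
    (a astar b bstar : Fin V) (hW : b ≠ astar) (hWstar : bstar ≠ a)
    (W Wstar : Finset (Fin V)) (hWdef : W = {b, astar}) (hWstardef : Wstar = {bstar, a})
    -- set probabilities `p(W), p(W*)` and set-context joints `p(W,cⱼ), p(W*,cⱼ)`
    (pW pWstar : ℝ) (hpW : 0 < pW) (hpWstar : 0 < pWstar)
    (pWc pWstarc : Fin V → ℝ) (hpWc : ∀ j, 0 < pWc j) (hpWstarc : ∀ j, 0 < pWstarc j)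
    -- the error-term vectors
    (ρ : Fin V → ℝ) (hρ : ρ = fun j => Real.log ((pWstarc j / pWstar) / (pWc j / pW)))
    (σ : Fin V → ℝ)
    (hσ : σ = fun j => Real.log ((pWc j / pc j) / ∏ i ∈ W, (pj i j / pc j)))
    (σs : Fin V → ℝ)
    (hσs : σs = fun j => Real.log ((pWstarc j / pc j) / ∏ i ∈ Wstar, (pj i j / pc j)))
    (δ : Fin V → ℝ) (hδ : δ = fun _ => Real.log (pWstar / pW))
    (ξ : Fin V → ℝ) (hξ : ξ = fun j => Real.log ((pWstarc j / pc j) / (pWc j / pc j))) :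
    w bstar = w astar - w a + w b + Cdag.mulVec (ρ + σ - σs + δ) ∧
    w bstar = w astar - w a + w b + Cdag.mulVec (ξ + σ - σs) := by
  -- `CᵀC` is invertible
  have hrankT : (Cmatᵀ * Cmat).rank = Fintype.card (Fin p) := by
    rw [Matrix.rank_transpose_mul_self, hrank, Fintype.card_fin]
  have hunit : IsUnit (Cmatᵀ * Cmat) := by
    rw [← Matrix.mulVec_surjective_iff_isUnit]
    have hr : LinearMap.range (Cmatᵀ * Cmat).mulVecLin = ⊤ := by
      apply Submodule.eq_top_of_finrank_eq
      rw [show Module.finrank ℝ (LinearMap.range (Cmatᵀ * Cmat).mulVecLin)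
          = (Cmatᵀ * Cmat).rank from rfl, hrankT,
        Module.finrank_fintype_fun_eq_card]
    intro y
    obtain ⟨x, hx⟩ := LinearMap.range_eq_top.mp hr y
    exact ⟨x, hx⟩
  have hdet : IsUnit (Cmatᵀ * Cmat).det := (Matrix.isUnit_iff_isUnit_det _).mp hunit
  have hleft : Cdag * Cmat = 1 := by
    rw [hCdag, Matrix.mul_assoc, Matrix.nonsing_inv_mul _ hdet]
  -- key vector identity
  set u : Fin p → ℝ := w bstar - w astar + w a - w b with hu
  have hlog : ∀ j, ξ j + σ j - σs j
      = Real.log (pj bstar j / pc j) + Real.log (pj a j / pc j)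
        - Real.log (pj b j / pc j) - Real.log (pj astar j / pc j) := by
    intro j
    have hpcj := (hpc j).ne'
    have h1 : ∏ i ∈ W, (pj i j / pc j) = (pj b j / pc j) * (pj astar j / pc j) := by
      rw [hWdef, Finset.prod_pair hW]
    have h2 : ∏ i ∈ Wstar, (pj i j / pc j)
        = (pj bstar j / pc j) * (pj a j / pc j) := by
      rw [hWstardef, Finset.prod_pair hWstar]
    simp only [hξ, hσ, hσs]
    rw [h1, h2]
    have pos : ∀ i : Fin V, (0:ℝ) < pj i j / pc j := fun i => div_pos (hpj i j) (hpc j)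
    rw [Real.log_div (div_pos (hpWstarc j) (hpc j)).ne' (div_pos (hpWc j) (hpc j)).ne',
      Real.log_div (div_pos (hpWc j) (hpc j)).ne' (mul_pos (pos b) (pos astar)).ne',
      Real.log_div (div_pos (hpWstarc j) (hpc j)).ne' (mul_pos (pos bstar) (pos a)).ne',
      Real.log_mul (pos b).ne' (pos astar).ne', Real.log_mul (pos bstar).ne' (pos a).ne']
    ring
  have hv : ξ + σ - σs = Cmat.mulVec u := by
    funext j
    have hMeq : ∀ i, Real.log (pj i j / pc j) = M i j - Real.log V := by
      intro i; rw [hM]; ring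
    have : (ξ + σ - σs) j = M bstar j + M a j - M b j - M astar j := by
      simp only [Pi.add_apply, Pi.sub_apply]
      rw [hlog j, hMeq, hMeq, hMeq, hMeq]; ring
    rw [this, ← hfact, ← hfact, ← hfact, ← hfact]
    rw [hC]
    have hex : (Matrix.of c).mulVec u j = u ⬝ᵥ c j := by
      simp [Matrix.mulVec, dotProduct_comm]
    rw [hex, hu]
    simp only [sub_dotProduct, add_dotProduct]
    ring
  have key : Cdag.mulVec (ξ + σ - σs) = u := by
    rw [hv, Matrix.mulVec_mulVec, hleft, Matrix.one_mulVec]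
  have h2 : w bstar = w astar - w a + w b + Cdag.mulVec (ξ + σ - σs) := by
    rw [key, hu]; abel
  have heq : ρ + σ - σs + δ = ξ + σ - σs := by
    funext j
    simp only [Pi.add_apply, Pi.sub_apply, hρ, hδ, hξ]
    have e1 : (pWstarc j / pc j) / (pWc j / pc j) = pWstarc j / pWc j := by
      exact div_div_div_cancel_right₀ (hpc j).ne' _ _
    rw [e1, Real.log_div (div_pos (hpWstarc j) hpWstar).ne' (div_pos (hpWc j) hpW).ne',
      Real.log_div (hpWstarc j).ne' (hpWc j).ne',
      Real.log_div (hpWstarc j).ne' hpWstar.ne', Real.log_div (hpWc j).ne' hpW.ne',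
      Real.log_div hpWstar.ne' hpW.ne']
    ring
  exact ⟨by rw [heq]; exact h2, h2⟩
end

section
/- (Exact version of Proposition 5, linear analogies transfer to CBOW context embeddings.) Let r, s, t, u ∈ [n] be words satisfying: (i) μ_r μ_s = μ_t μ_u (encoding that p({r,s}) = p({t,u}) under exact marginal independence within each pair); (ii) w_r + w_s = w_t + w_u. Suppose further that the n×p matrix W with rows w_v^T has rank p, i.e., the only x ∈ ℝ^p with w_v^T x = 0 for all v ∈ [n] is x = 0. Then c_r + c_s = c_t + c_u. -/
open Matrix BigOperators

/-- **Exact version of Proposition 5 (linear analogies transfer to CBOW context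
embeddings).**  Under the exact CBOW factorization `wᵢᵀcⱼ = log(pᵢⱼ/μⱼ) + log n` with
symmetric strictly positive joint `p` and strictly positive marginals `μ`, if
`μᵣμₛ = μₜμᵤ` (encoding `p({r,s}) = p({t,u})` under exact marginal independence
within each pair), `wᵣ + wₛ = wₜ + wᵤ`, and the matrix `W` of center embeddings has
rank `p` (only `x = 0` is orthogonal to all its rows), then `cᵣ + cₛ = cₜ + cᵤ`. -/
theorem cbow_context_embedding_analogy
    (n p : ℕ) (hn : 1 ≤ n)
    -- strictly positive symmetric joint matrix and strictly positive marginals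
    (pj : Fin n → Fin n → ℝ) (hpj : ∀ i j, 0 < pj i j)
    (hsymm : ∀ i j, pj i j = pj j i)
    (μ : Fin n → ℝ) (hμ : ∀ j, 0 < μ j)
    -- center and context embeddings with exact CBOW factorization
    (w : Fin n → Fin p → ℝ) (c : Fin n → Fin p → ℝ)
    (hfact : ∀ i j : Fin n, w i ⬝ᵥ c j = Real.log (pj i j / μ j) + Real.log n)
    -- the four words
    (r s t u : Fin n)
    -- (i) `p({r,s}) = p({t,u})` under exact marginal independence within each pair
    (hmarg : μ r * μ s = μ t * μ u)
    -- (ii) linear analogy among the center embeddings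
    (hana : w r + w s = w t + w u)
    -- the center-embedding matrix `W` has rank `p`
    (hrank : ∀ x : Fin p → ℝ, (∀ v : Fin n, w v ⬝ᵥ x = 0) → x = 0) :
    c r + c s = c t + c u := by
  -- Step 1: from the analogy among center embeddings, get pⱼ multiplicativity
  have key : ∀ v : Fin n, pj v r * pj v s = pj v t * pj v u := by
    intro v
    have h1 : (w r + w s) ⬝ᵥ c v = (w t + w u) ⬝ᵥ c v := by rw [hana]
    rw [add_dotProduct, add_dotProduct, hfact, hfact, hfact, hfact] at h1
    have hlog : Real.log (pj r v / μ v) + Real.log (pj s v / μ v)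
        = Real.log (pj t v / μ v) + Real.log (pj u v / μ v) := by linarith
    have hpos : ∀ a b : Fin n, (0:ℝ) < pj a b / μ b := fun a b =>
      div_pos (hpj a b) (hμ b)
    rw [← Real.log_mul (ne_of_gt (hpos r v)) (ne_of_gt (hpos s v)),
        ← Real.log_mul (ne_of_gt (hpos t v)) (ne_of_gt (hpos u v))] at hlog
    have := Real.log_injOn_pos (Set.mem_Ioi.mpr (mul_pos (hpos r v) (hpos s v)))
      (Set.mem_Ioi.mpr (mul_pos (hpos t v) (hpos u v))) hlog
    have hμv : (μ v : ℝ) ≠ 0 := ne_of_gt (hμ v)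
    field_simp at this
    have hrs : pj v r * pj v s = pj r v * pj s v := by rw [hsymm v r, hsymm v s]
    have htu : pj v t * pj v u = pj t v * pj u v := by rw [hsymm v t, hsymm v u]
    rw [hrs, htu]
    exact this
  -- Step 2: show the difference is orthogonal to every row
  have hdiff : ∀ v : Fin n, w v ⬝ᵥ (c r + c s - (c t + c u)) = 0 := by
    intro v
    rw [dotProduct_sub, dotProduct_add, dotProduct_add,
        hfact, hfact, hfact, hfact]
    have hpos : ∀ a b : Fin n, (0:ℝ) < pj a b / μ b := fun a b =>
      div_pos (hpj a b) (hμ b)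
    have h2 : Real.log (pj v r / μ r) + Real.log (pj v s / μ s)
        = Real.log (pj v t / μ t) + Real.log (pj v u / μ u) := by
      rw [← Real.log_mul (ne_of_gt (hpos v r)) (ne_of_gt (hpos v s)),
          ← Real.log_mul (ne_of_gt (hpos v t)) (ne_of_gt (hpos v u))]
      congr 1
      rw [div_mul_div_comm, div_mul_div_comm, key v, hmarg]
    linarith
  have h0 := hrank _ hdiff
  exact sub_eq_zero.mp h0
end

section
/- (Proposition 7, linear word analogies in attention-based embeddings.) Suppose the embeddings exactly factorize N, i.e., w_i^T c̃_j = N_{ij} for all i, j ∈ [|V|], and suppose the |V|×p transformed context-embedding matrix C̃ (with rows c̃_j^T) has rank p, with left inverse C̃† = (C̃^T C̃)^{−1} C̃^T. Then for any words a, a*, b, b* such that the sets W = {w_b, w_{a*}} and W* = {w_{b*}, w_a} each have exactly two elements, w_{b*} = w_{a*} − w_a + w_b + C̃†( ρ̄^{W,W*} + σ̄^{W} − σ̄^{W*} + δ̄^{W,W*} ) and also w_{b*} = w_{a*} − w_a + w_b + C̃†( ξ̄^{W,W*} + σ̄^{W} − σ̄^{W*} ), where ρ̄^{W,W*}, σ̄^{W},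 σ̄^{W*}, δ̄^{W,W*}, ξ̄^{W,W*} ∈ ℝ^{|V|} are the vectors with j-th coordinates ρ̄_j^{W,W*} = log( p̄(c_j | W*) / p̄(c_j | W) ), σ̄_j^{W} = log( p̄(W | c_j) / Π_{w_i ∈ W} p̄(w_i | c_j) ), σ̄_j^{W*} = log( p̄(W* | c_j) / Π_{w_i ∈ W*} p̄(w_i | c_j) ), δ̄_j^{W,W*} = log( p̄(W*) / p̄(W) ), ξ̄_j^{W,W*} = log( p̄(W* | c_j) / p̄(W | c_j) ). -/
open Matrix BigOperators

private lemma aux_isUnit_of_rank {p : ℕ} (M : Matrix (Fin p) (Fin p) ℝ)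
    (h : M.rank = p) : IsUnit M := by
  have hrange : LinearMap.range M.mulVecLin = ⊤ := by
    apply Submodule.eq_top_of_finrank_eq
    have : M.rank = Module.finrank ℝ (LinearMap.range M.mulVecLin) := rfl
    rw [← this, h]
    simp
  have hsurj : Function.Surjective M.mulVec := by
    intro v
    obtain ⟨x, hx⟩ := LinearMap.range_eq_top.mp hrange v
    exact ⟨x, hx⟩
  exact Matrix.mulVec_surjective_iff_isUnit.mp hsurj

/-- **Proposition 7 (linear word analogies in attention-based embeddings).**
Suppose the embeddings exactly factorize `N`, i.e. `wᵢᵀc̃ⱼ = N i j` for all `i, j`,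
where `N i j = log(p̄(wᵢ,cⱼ)/p̄(cⱼ)) + log V` for the (not necessarily symmetric)
strictly positive quantities `p̄`, and the `|V|×p` transformed context-embedding matrix
`C̃` has rank `p`, with left inverse `C̃† = (C̃ᵀC̃)⁻¹C̃ᵀ`.  Then for words `a, a*, b, b*`
such that `W = {w_b, w_{a*}}` and `W* = {w_{b*}, w_a}` each have exactly two elements,
`w_{b*} = w_{a*} − w_a + w_b + C̃†(ρ̄ + σ̄ − σ̄* + δ̄)` and
`w_{b*} = w_{a*} − w_a + w_b + C̃†(ξ̄ + σ̄ − σ̄*)`. -/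
theorem attention_linear_word_analogies
    (V p : ℕ) (hV : 1 ≤ V)
    -- joint quantities `p̄(wᵢ, cⱼ)` (not necessarily symmetric) and marginals `p̄(cⱼ)`
    (pj : Fin V → Fin V → ℝ) (hpj : ∀ i j, 0 < pj i j)
    (pc : Fin V → ℝ) (hpc : ∀ j, 0 < pc j)
    -- the matrix `N`
    (N : Fin V → Fin V → ℝ)
    (hN : N = fun i j => Real.log (pj i j / pc j) + Real.log V)
    -- center embeddings `wᵢ` and transformed context embeddings `c̃ⱼ`
    (w : Fin V → Fin p → ℝ) (ctilde : Fin V → Fin p → ℝ)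
    -- exact factorization `wᵢᵀ c̃ⱼ = N i j`
    (hfact : ∀ i j : Fin V, w i ⬝ᵥ ctilde j = N i j)
    -- the transformed context-embedding matrix, its rank-`p` assumption, and left inverse
    (Ctilde : Matrix (Fin V) (Fin p) ℝ) (hC : Ctilde = Matrix.of ctilde)
    (hrank : Ctilde.rank = p)
    (Cdag : Matrix (Fin p) (Fin V) ℝ)
    (hCdag : Cdag = (Ctilde.transpose * Ctilde)⁻¹ * Ctilde.transpose)
    -- the four words and the two word sets, each with exactly two elements
    (a astar b bstar : Fin V) (hW : b ≠ astar) (hWstar : bstar ≠ a)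
    (W Wstar : Finset (Fin V)) (hWdef : W = {b, astar}) (hWstardef : Wstar = {bstar, a})
    -- set quantities `p̄(W), p̄(W*)` and set-context joints `p̄(W,cⱼ), p̄(W*,cⱼ)`
    (pW pWstar : ℝ) (hpW : 0 < pW) (hpWstar : 0 < pWstar)
    (pWc pWstarc : Fin V → ℝ) (hpWc : ∀ j, 0 < pWc j) (hpWstarc : ∀ j, 0 < pWstarc j)
    -- the error-term vectors
    (ρ : Fin V → ℝ) (hρ : ρ = fun j => Real.log ((pWstarc j / pWstar) / (pWc j / pW)))
    (σ : Fin V → ℝ)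
    (hσ : σ = fun j => Real.log ((pWc j / pc j) / ∏ i ∈ W, (pj i j / pc j)))
    (σs : Fin V → ℝ)
    (hσs : σs = fun j => Real.log ((pWstarc j / pc j) / ∏ i ∈ Wstar, (pj i j / pc j)))
    (δ : Fin V → ℝ) (hδ : δ = fun _ => Real.log (pWstar / pW))
    (ξ : Fin V → ℝ) (hξ : ξ = fun j => Real.log ((pWstarc j / pc j) / (pWc j / pc j))) :
    w bstar = w astar - w a + w b + Cdag.mulVec (ρ + σ - σs + δ) ∧
    w bstar = w astar - w a + w b + Cdag.mulVec (ξ + σ - σs) := by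
  set u : Fin p → ℝ := w bstar + w a - w astar - w b with hu
  -- the right-hand side vector equals Ctilde.mulVec u coordinatewise
  have hRHS : ∀ j, Ctilde.mulVec u j =
      Real.log (pj bstar j) + Real.log (pj a j)
        - Real.log (pj astar j) - Real.log (pj b j) := by
    intro j
    have h1 : Ctilde.mulVec u j = u ⬝ᵥ ctilde j := by
      subst hC
      simp [Matrix.mulVec, dotProduct, mul_comm]
    rw [h1, hu]
    simp only [add_dotProduct, sub_dotProduct, hfact, hN]
    rw [Real.log_div (hpj bstar j).ne' (hpc j).ne',
        Real.log_div (hpj a j).ne' (hpc j).ne',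
        Real.log_div (hpj astar j).ne' (hpc j).ne',
        Real.log_div (hpj b j).ne' (hpc j).ne']
    ring
  have hprodW : ∀ j, ∏ i ∈ W, (pj i j / pc j) = (pj b j / pc j) * (pj astar j / pc j) := by
    intro j; rw [hWdef, Finset.prod_pair hW]
  have hprodWs : ∀ j, ∏ i ∈ Wstar, (pj i j / pc j)
      = (pj bstar j / pc j) * (pj a j / pc j) := by
    intro j; rw [hWstardef, Finset.prod_pair hWstar]
  have hkey2 : ξ + σ - σs = Ctilde.mulVec u := by
    funext j
    simp only [Pi.add_apply, Pi.sub_apply, hξ, hσ, hσs]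
    rw [hRHS j, hprodW j, hprodWs j]
    have c1 := (hpc j); have c2 := hpWc j; have c3 := hpWstarc j
    have d1 := hpj b j; have d2 := hpj astar j; have d3 := hpj bstar j; have d4 := hpj a j
    simp (disch := positivity) only [Real.log_div, Real.log_mul]
    ring
  have hkey1 : ρ + σ - σs + δ = Ctilde.mulVec u := by
    have : ρ + σ - σs + δ = ξ + σ - σs := by
      funext j
      simp only [Pi.add_apply, Pi.sub_apply, hρ, hδ, hξ]
      have c1 := (hpc j); have c2 := hpWc j; have c3 := hpWstarc j
      simp (disch := positivity) only [Real.log_div, Real.log_mul]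
      ring
    rw [this, hkey2]
  -- left inverse property
  have hunit : IsUnit (Ctilde.transpose * Ctilde) := by
    apply aux_isUnit_of_rank
    rw [Matrix.rank_transpose_mul_self, hrank]
  have hleft : Cdag * Ctilde = 1 := by
    rw [hCdag, Matrix.mul_assoc]
    exact Matrix.nonsing_inv_mul _ (((Matrix.isUnit_iff_isUnit_det _).mp hunit))
  have hinv : ∀ v : Fin V → ℝ, v = Ctilde.mulVec u → Cdag.mulVec v = u := by
    intro v hv
    rw [hv, Matrix.mulVec_mulVec, hleft, Matrix.one_mulVec]
  constructor
  · rw [hinv _ hkey1, hu]; abel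
  · rw [hinv _ hkey2, hu]; abel
end

section
/- (Exact version of Proposition 8, linear analogies transfer to transformed attention context embeddings.) Let r, s, t, u ∈ [n] be words satisfying: (i) ν_r ν_s = ν_t ν_u (encoding that p̄({r,s}) = p̄({t,u}) under exact marginal independence within each pair); (ii) the symmetry condition p̄_{ij} = p̄_{ji} for all i, j ∈ [n]; (iii) w_r + w_s = w_t + w_u. Suppose further that the n×p matrix W with rows w_v^T has rank p, i.e., the only x ∈ ℝ^p with w_v^T x = 0 for all v ∈ [n] is x = 0. Then c̃_r + c̃_s = c̃_t + c̃_u. -/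
open Matrix BigOperators

/-- **Exact version of Proposition 8 (linear analogies transfer to transformed
attention context embeddings).**  Under the exact factorization
`wᵢᵀc̃ⱼ = log(p̄ᵢⱼ/νⱼ) + log n` with strictly positive joint `p̄` and marginals `ν`,
if `νᵣνₛ = νₜνᵤ` (encoding `p̄({r,s}) = p̄({t,u})` under exact marginal independence
within each pair), the symmetry condition `p̄ᵢⱼ = p̄ⱼᵢ` holds for all `i, j`,
`wᵣ + wₛ = wₜ + wᵤ`, and the matrix `W` of center embeddings has rank `p` (only
`x = 0` is orthogonal to all its rows), then `c̃ᵣ + c̃ₛ = c̃ₜ + c̃ᵤ`. -/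
theorem attention_context_embedding_analogy
    (n p : ℕ) (hn : 1 ≤ n)
    -- strictly positive joint matrix and strictly positive marginals
    (pj : Fin n → Fin n → ℝ) (hpj : ∀ i j, 0 < pj i j)
    (ν : Fin n → ℝ) (hν : ∀ j, 0 < ν j)
    -- center embeddings and transformed context embeddings with exact factorization
    (w : Fin n → Fin p → ℝ) (ctilde : Fin n → Fin p → ℝ)
    (hfact : ∀ i j : Fin n, w i ⬝ᵥ ctilde j = Real.log (pj i j / ν j) + Real.log n)
    -- the four words
    (r s t u : Fin n)
    -- (i) `p̄({r,s}) = p̄({t,u})` under exact marginal independence within each pair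
    (hmarg : ν r * ν s = ν t * ν u)
    -- (ii) the symmetry condition
    (hsymm : ∀ i j, pj i j = pj j i)
    -- (iii) linear analogy among the center embeddings
    (hana : w r + w s = w t + w u)
    -- the center-embedding matrix `W` has rank `p`
    (hrank : ∀ x : Fin p → ℝ, (∀ v : Fin n, w v ⬝ᵥ x = 0) → x = 0) :
    ctilde r + ctilde s = ctilde t + ctilde u := by
  have hlog : ∀ i j, w i ⬝ᵥ ctilde j = Real.log (pj i j) - Real.log (ν j) + Real.log n := by
    intro i j
    rw [hfact, Real.log_div (ne_of_gt (hpj i j)) (ne_of_gt (hν j))]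
  have key : ∀ v, w v ⬝ᵥ (ctilde r + ctilde s - (ctilde t + ctilde u)) = 0 := by
    intro v
    have hν' : Real.log (ν r) + Real.log (ν s) = Real.log (ν t) + Real.log (ν u) := by
      rw [← Real.log_mul (ne_of_gt (hν r)) (ne_of_gt (hν s)),
          ← Real.log_mul (ne_of_gt (hν t)) (ne_of_gt (hν u)), hmarg]
    have hpj' : Real.log (pj v r) + Real.log (pj v s)
        = Real.log (pj v t) + Real.log (pj v u) := by
      have h2 : (w r + w s) ⬝ᵥ ctilde v = (w t + w u) ⬝ᵥ ctilde v := by rw [hana]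
      rw [add_dotProduct, add_dotProduct, hlog, hlog, hlog, hlog] at h2
      rw [hsymm v r, hsymm v s, hsymm v t, hsymm v u]
      linarith
    rw [dotProduct_sub, dotProduct_add, dotProduct_add, hlog, hlog, hlog, hlog]
    linarith
  exact sub_eq_zero.mp (hrank _ key)
end
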